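/- For every finite incomparability graph G and every natural number k ≥ 1, the minimal number of vertex sets each of diameter at most k needed to cover V(G) equals the maximal size of a k-independent set: ρₖ(G) = γₖ(G). -/

import Mathlib

variable {V : Type*} [Fintype V] [DecidableEq V]

/-- `G` is an incomparability graph. -/
def IsIncomparabilityGraph (G : SimpleGraph V) : Prop :=
  ∃ r : V → V → Prop, IsStrictOrder V r ∧
    ∀ x y, G.Adj x y ↔ (x ≠ y ∧ ¬ r x y ∧ ¬ r y x)

/-- `S` is `k`-independent: distinct vertices of `S` are at distance greater than `k`. -/
def KIndependent (G : SimpleGraph V) (k : ℕ) (S : Finset V) : Prop :=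
  ∀ x ∈ S, ∀ y ∈ S, x ≠ y → ¬ (G.Reachable x y ∧ G.dist x y ≤ k)

/-- `s` has diameter at most `k` in `G`. -/
def DiamAtMost (G : SimpleGraph V) (k : ℕ) (s : Finset V) : Prop :=
  ∀ x ∈ s, ∀ y ∈ s, G.Reachable x y ∧ G.dist x y ≤ k

/-- `γₖ(G)`: maximal size of a `k`-independent set. -/
noncomputable def gammaK (G : SimpleGraph V) (k : ℕ) : ℕ :=
  sSup {n | ∃ S : Finset V, KIndependent G k S ∧ S.card = n}

/-- `ρₖ(G)`: minimal number of sets of diameter at most `k` covering `V`. -/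
noncomputable def rhoK (G : SimpleGraph V) (k : ℕ) : ℕ :=
  sInf {n | ∃ P : Finset (Finset V), (∀ s ∈ P, DiamAtMost G k s) ∧
    (∀ v : V, ∃ s ∈ P, v ∈ s) ∧ P.card = n}

/-- On a walk from `x` to `z` with `x < y < z`, some vertex is `y` or adjacent to `y`. -/
lemma walk_near {G : SimpleGraph V} {r : V → V → Prop}
    (htrans : ∀ a b c : V, r a b → r b c → r a c)
    (hasymm : ∀ a b : V, r a b → ¬ r b a)
    (hadj : ∀ x y, G.Adj x y ↔ (x ≠ y ∧ ¬ r x y ∧ ¬ r y x))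
    (y : V) :
    ∀ {x z : V} (p : G.Walk x z), r x y → r y z → ∃ w ∈ p.support, w = y ∨ G.Adj w y := by
  intro x z p
  induction p with
  | nil => intro hxy hyz; exact absurd hyz (hasymm _ _ hxy)
  | @cons a b c h q ih =>
    intro hxy hyz
    by_cases hb : b = y ∨ G.Adj b y
    · refine ⟨b, ?_, hb⟩
      rw [SimpleGraph.Walk.support_cons]
      exact List.mem_cons_of_mem _ q.start_mem_support
    · push_neg at hb
      obtain ⟨hb1, hb2⟩ := hb
      have hcomp : r b y ∨ r y b := by
        by_contra hc
        push_neg at hc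
        exact hb2 ((hadj b y).mpr ⟨hb1, hc.1, hc.2⟩)
      rcases hcomp with hby | hyb
      · obtain ⟨w, hw, hw2⟩ := ih hby hyz
        refine ⟨w, ?_, hw2⟩
        rw [SimpleGraph.Walk.support_cons]
        exact List.mem_cons_of_mem _ hw
      · exact absurd (htrans _ _ _ hxy hyb) ((hadj _ _).mp h).2.1

theorem stmt8 (G : SimpleGraph V) (hG : IsIncomparabilityGraph G)
    (k : ℕ) (hk : 1 ≤ k) :
    rhoK G k = gammaK G k := by
  classical
  obtain ⟨r, hso, hadj⟩ := hG
  have htrans : ∀ {a b c : V}, r a b → r b c → r a c :=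
    fun h1 h2 => hso.toIsTrans.trans _ _ _ h1 h2
  have hirr : ∀ a : V, ¬ r a a := fun a => hso.toIrrefl.irrefl a
  have hasymm : ∀ {a b : V}, r a b → ¬ r b a :=
    fun h1 h2 => hirr _ (htrans h1 h2)
  -- the Flotow order on the distance-≤-k graph
  set s : V → V → Prop :=
    fun x y => r x y ∧ ¬ (G.Reachable x y ∧ G.dist x y ≤ k) with hs
  have sasymm : ∀ {a b : V}, s a b → ¬ s b a :=
    fun h1 h2 => hasymm h1.1 h2.1
  have sirr : ∀ a : V, ¬ s a a := fun a h => hirr a h.1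
  have strans : ∀ {x y z : V}, s x y → s y z → s x z := by
    rintro x y z ⟨hr1, hd1⟩ ⟨hr2, hd2⟩
    refine ⟨htrans hr1 hr2, ?_⟩
    rintro ⟨hreach, hdist⟩
    obtain ⟨p, hp⟩ := hreach.exists_walk_length_eq_dist
    obtain ⟨w, hwsup, hwy⟩ := walk_near (r := r) (fun _ _ _ h1 h2 => htrans h1 h2) (fun _ _ h1 h2 => hasymm h1 h2) hadj y p hr1 hr2
    have hlen : (p.takeUntil w hwsup).length + (p.dropUntil w hwsup).length
        = p.length := by
      have h := congrArg SimpleGraph.Walk.length (p.take_spec hwsup)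
      rw [SimpleGraph.Walk.length_append] at h
      exact h
    have wxy : ∃ q : G.Walk x y, q.length ≤ (p.takeUntil w hwsup).length + 1 := by
      rcases hwy with rfl | ha
      · exact ⟨p.takeUntil w hwsup, Nat.le_succ _⟩
      · exact ⟨(p.takeUntil w hwsup).concat ha,
          le_of_eq (SimpleGraph.Walk.length_concat _ _)⟩
    have wyz : ∃ q : G.Walk y z, q.length ≤ (p.dropUntil w hwsup).length + 1 := by
      rcases hwy with rfl | ha
      · exact ⟨p.dropUntil w hwsup, Nat.le_succ _⟩
      · exact ⟨SimpleGraph.Walk.cons ha.symm (p.dropUntil w hwsup), by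
          rw [SimpleGraph.Walk.length_cons]⟩
    obtain ⟨q1, hq1⟩ := wxy
    obtain ⟨q2, hq2⟩ := wyz
    have h1 : k < q1.length := by
      by_contra hle
      push_neg at hle
      exact hd1 ⟨q1.reachable, le_trans (SimpleGraph.dist_le q1) hle⟩
    have h2 : k < q2.length := by
      by_contra hle
      push_neg at hle
      exact hd2 ⟨q2.reachable, le_trans (SimpleGraph.dist_le q2) hle⟩
    rw [hp] at hlen
    omega
  -- key equivalence
  have hkey : ∀ x y : V, x ≠ y →
      ((G.Reachable x y ∧ G.dist x y ≤ k) ↔ (¬ s x y ∧ ¬ s y x)) := by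
    intro x y hne
    constructor
    · intro h
      exact ⟨fun hs' => hs'.2 h,
        fun hs' => hs'.2 ⟨h.1.symm, by rw [SimpleGraph.dist_comm]; exact h.2⟩⟩
    · rintro ⟨h1, h2⟩
      by_cases hrxy : r x y
      · by_contra hD
        exact h1 ⟨hrxy, hD⟩
      · by_cases hryx : r y x
        · by_contra hD
          refine h2 ⟨hryx, ?_⟩
          rintro ⟨ha, hb⟩
          exact hD ⟨ha.symm, by rw [SimpleGraph.dist_comm]; exact hb⟩
        · have hA : G.Adj x y := (hadj x y).mpr ⟨hne, hrxy, hryx⟩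
          refine ⟨hA.reachable, le_trans ?_ hk⟩
          have := SimpleGraph.dist_le (SimpleGraph.Walk.cons hA SimpleGraph.Walk.nil)
          simpa using this
  -- height function for the Mirsky argument
  set Ch : V → Finset (Finset V) := fun v => Finset.univ.filter fun S : Finset V =>
    v ∈ S ∧ (∀ x ∈ S, ∀ y ∈ S, x ≠ y → s x y ∨ s y x) ∧ (∀ x ∈ S, x = v ∨ s x v)
    with hCh
  set H : V → ℕ := fun v => (Ch v).sup Finset.card with hH
  have hmemCh : ∀ v (S : Finset V), S ∈ Ch v ↔
      (v ∈ S ∧ (∀ x ∈ S, ∀ y ∈ S, x ≠ y → s x y ∨ s y x) ∧ (∀ x ∈ S, x = v ∨ s x v)) := by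
    intro v S
    simp [hCh, Finset.mem_filter]
  have hsingle : ∀ v : V, ({v} : Finset V) ∈ Ch v := by
    intro v
    rw [hmemCh]
    refine ⟨Finset.mem_singleton_self v, ?_, ?_⟩
    · intro x hx y hy hne
      rw [Finset.mem_singleton] at hx hy
      exact absurd (hx.trans hy.symm) hne
    · intro x hx
      exact Or.inl (Finset.mem_singleton.mp hx)
  have hHachieve : ∀ v : V, ∃ S ∈ Ch v, S.card = H v := by
    intro v
    obtain ⟨S, hS, hS2⟩ := Finset.exists_mem_eq_sup (Ch v) ⟨{v}, hsingle v⟩ Finset.card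
    exact ⟨S, hS, hS2.symm⟩
  have hHpos : ∀ v : V, 1 ≤ H v := by
    intro v
    have := Finset.le_sup (f := Finset.card) (hsingle v)
    rw [Finset.card_singleton] at this
    exact this
  have hmono : ∀ x y : V, s x y → H x < H y := by
    intro x y hxy
    obtain ⟨S, hS, hcard⟩ := hHachieve x
    rw [hmemCh] at hS
    obtain ⟨hxS, hchain, hend⟩ := hS
    have hyS : y ∉ S := by
      intro hy
      rcases hend y hy with rfl | hsy
      · exact sirr y hxy
      · exact sasymm hxy hsy
    have hins : insert y S ∈ Ch y := by
      rw [hmemCh]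
      have hle : ∀ a ∈ S, s a y := by
        intro a ha
        rcases hend a ha with rfl | hsa
        · exact hxy
        · exact strans hsa hxy
      refine ⟨Finset.mem_insert_self y S, ?_, ?_⟩
      · intro a ha b hb hne
        rw [Finset.mem_insert] at ha hb
        rcases ha with rfl | ha
        · rcases hb with rfl | hb
          · exact absurd rfl hne
          · exact Or.inr (hle b hb)
        · rcases hb with rfl | hb
          · exact Or.inl (hle a ha)
          · exact hchain a ha b hb hne
      · intro a ha
        rw [Finset.mem_insert] at ha
        rcases ha with rfl | ha
        · exact Or.inl rfl
        · exact Or.inr (hle a ha)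
    have := Finset.le_sup (f := Finset.card) hins
    rw [Finset.card_insert_of_notMem hyS, hcard] at this
    exact this
  -- chains are k-independent
  have hchain_kind : ∀ S : Finset V,
      (∀ x ∈ S, ∀ y ∈ S, x ≠ y → s x y ∨ s y x) → KIndependent G k S := by
    intro S hS x hx y hy hne hD
    rcases hS x hx y hy hne with h | h
    · exact h.2 hD
    · exact h.2 ⟨hD.1.symm, by rw [SimpleGraph.dist_comm]; exact hD.2⟩
  have hbdd : BddAbove {n | ∃ S : Finset V, KIndependent G k S ∧ S.card = n} := by
    refine ⟨Fintype.card V, ?_⟩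
    rintro n ⟨S, _, rfl⟩
    exact S.card_le_univ
  have hgammane : {n | ∃ S : Finset V, KIndependent G k S ∧ S.card = n}.Nonempty := by
    refine ⟨0, ∅, ?_, rfl⟩
    intro x hx
    simp at hx
  have hHle : ∀ v : V, H v ≤ gammaK G k := by
    intro v
    obtain ⟨S, hS, hcard⟩ := hHachieve v
    rw [hmemCh] at hS
    refine le_csSup hbdd ?_
    exact ⟨S, hchain_kind S hS.2.1, hcard⟩
  -- the antichain cover
  set P : Finset (Finset V) :=
    (Finset.univ.image H).image (fun i => Finset.univ.filter fun v => H v = i) with hP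
  have hPdiam : ∀ t ∈ P, DiamAtMost G k t := by
    intro t ht
    rw [hP, Finset.mem_image] at ht
    obtain ⟨i, _, rfl⟩ := ht
    intro x hx y hy
    rw [Finset.mem_filter] at hx hy
    by_cases hne : x = y
    · subst hne
      exact ⟨SimpleGraph.Reachable.refl x, by rw [SimpleGraph.dist_self]; exact Nat.zero_le k⟩
    · refine (hkey x y hne).mpr ⟨?_, ?_⟩
      · intro hsxy
        have := hmono x y hsxy
        rw [hx.2, hy.2] at this
        exact absurd this (lt_irrefl i)
      · intro hsyx
        have := hmono y x hsyx
        rw [hy.2, hx.2] at this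
        exact absurd this (lt_irrefl i)
  have hPcover : ∀ v : V, ∃ t ∈ P, v ∈ t := by
    intro v
    refine ⟨Finset.univ.filter fun w => H w = H v, ?_, ?_⟩
    · rw [hP]
      exact Finset.mem_image_of_mem _ (Finset.mem_image_of_mem _ (Finset.mem_univ v))
    · simp
  have hPcard : P.card ≤ gammaK G k := by
    have h1 : P.card ≤ (Finset.univ.image H).card := Finset.card_image_le
    have h2 : (Finset.univ.image H) ⊆ Finset.Icc 1 (gammaK G k) := by
      intro i hi
      rw [Finset.mem_image] at hi
      obtain ⟨v, _, rfl⟩ := hi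
      rw [Finset.mem_Icc]
      exact ⟨hHpos v, hHle v⟩
    have h3 := Finset.card_le_card h2
    rw [Nat.card_Icc] at h3
    omega
  -- conclude
  refine le_antisymm ?_ ?_
  · exact le_trans (Nat.sInf_le ⟨P, hPdiam, hPcover, rfl⟩) hPcard
  · refine le_csInf ?_ ?_
    · refine ⟨(Finset.univ.image fun v : V => ({v} : Finset V)).card,
        Finset.univ.image fun v : V => ({v} : Finset V), ?_, ?_, rfl⟩
      · intro t ht
        rw [Finset.mem_image] at ht
        obtain ⟨v, _, rfl⟩ := ht
        intro x hx y hy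
        rw [Finset.mem_singleton] at hx hy
        subst hx; subst hy
        exact ⟨SimpleGraph.Reachable.refl _, by rw [SimpleGraph.dist_self]; exact Nat.zero_le k⟩
      · intro v
        exact ⟨{v}, Finset.mem_image_of_mem _ (Finset.mem_univ v),
          Finset.mem_singleton_self v⟩
    · rintro n ⟨Q, hQdiam, hQcover, rfl⟩
      refine csSup_le hgammane ?_
      rintro m ⟨S, hSind, rfl⟩
      by_contra hlt
      push_neg at hlt
      have hmaps : ∀ v ∈ S, (hQcover v).choose ∈ Q :=
        fun v _ => (hQcover v).choose_spec.1
      obtain ⟨x, hx, y, hy, hne, heq⟩ :=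
        Finset.exists_ne_map_eq_of_card_lt_of_maps_to hlt hmaps
      have hxy := hQdiam _ ((hQcover x).choose_spec.1) x
        (hQcover x).choose_spec.2 y (heq ▸ (hQcover y).choose_spec.2)
      exact hSind x hx y hy hne hxy
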